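/- For every n, the number of partitions of n with distinct odd parts, all odd parts ≥ 3, and smallest even part at least 2(ℓ+1) where ℓ is the number of parts, equals the number of partitions of n with all parts ≥ 3, parts pairwise differing by at least 2, and even parts pairwise differing by at least 4; for n = 9 this common value is 2. -/

import Mathlib

/-- Odd parts are pairwise distinct. -/
def distinctOddParts (m : Multiset ℕ) : Prop := ∀ a, Odd a → m.count a ≤ 1

/-- Every even part is at least `k` (vacuous if no even part). -/
def minEvenGe (m : Multiset ℕ) (k : ℕ) : Prop := ∀ a ∈ m, Even a → k ≤ a

/-- Every odd part is at least `k` (vacuous if no odd part). -/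
def minOddGe (m : Multiset ℕ) (k : ℕ) : Prop := ∀ a ∈ m, Odd a → k ≤ a

/-- No two parts are equal or consecutive, and no two even parts are equal or
consecutive even numbers: parts pairwise differ by at least 2, even parts by at least 4. -/
def gapCond (m : Multiset ℕ) : Prop :=
  (∀ a, m.count a ≤ 1) ∧ (∀ a ∈ m, ∀ b ∈ m, a < b → a + 2 ≤ b) ∧
  (∀ a ∈ m, ∀ b ∈ m, Even a → Even b → a < b → a + 4 ≤ b)

/-- Number of even parts. -/
def evenCount (m : Multiset ℕ) : ℕ := (m.filter (fun a => Even a)).card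

/-- Number of odd parts. -/
def oddCount (m : Multiset ℕ) : ℕ := (m.filter (fun a => Odd a)).card


/-- add staircase s, s+2, s+4, ... -/
def stairL (s : ℕ) : List ℕ → List ℕ
  | [] => []
  | a :: t => (a + s) :: stairL (s + 2) t

/-- subtract staircase -/
def unstairL (s : ℕ) : List ℕ → List ℕ
  | [] => []
  | a :: t => (a - s) :: unstairL (s + 2) t

@[simp] theorem length_stairL (s : ℕ) (l : List ℕ) : (stairL s l).length = l.length := by
  induction l generalizing s with
  | nil => rfl
  | cons a t ih => simp [stairL, ih]

@[simp] theorem length_unstairL (s : ℕ) (l : List ℕ) : (unstairL s l).length = l.length := by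
  induction l generalizing s with
  | nil => rfl
  | cons a t ih => simp [unstairL, ih]

theorem getElem_stairL (s : ℕ) (l : List ℕ) (i : ℕ) (h : i < l.length)
    (h' : i < (stairL s l).length) : (stairL s l)[i] = l[i] + s + 2 * i := by
  induction l generalizing s i with
  | nil => simp at h
  | cons a t ih =>
    cases i with
    | zero => simp [stairL]
    | succ j =>
      simp only [stairL, List.getElem_cons_succ]
      rw [ih (s + 2) j (by simpa using h) (by simp; simpa using h)]
      ring

theorem getElem_unstairL (s : ℕ) (l : List ℕ) (i : ℕ) (h : i < l.length)
    (h' : i < (unstairL s l).length) : (unstairL s l)[i] = l[i] - (s + 2 * i) := by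
  induction l generalizing s i with
  | nil => simp at h
  | cons a t ih =>
    cases i with
    | zero => simp [unstairL]
    | succ j =>
      simp only [unstairL, List.getElem_cons_succ]
      rw [ih (s + 2) j (by simpa using h) (by simp; simpa using h)]
      congr 1
      ring

theorem sum_stairL (s : ℕ) (l : List ℕ) :
    (stairL s l).sum = l.sum + l.length * s + l.length * (l.length - 1) := by
  induction l generalizing s with
  | nil => simp [stairL]
  | cons a t ih =>
    simp only [stairL, List.sum_cons, ih (s + 2), List.length_cons]
    cases t.length with
    | zero => simp; ring
    | succ k => simp [Nat.succ_sub_one]; ring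

theorem unstair_stair (s : ℕ) (l : List ℕ) : unstairL s (stairL s l) = l := by
  apply List.ext_getElem (by simp)
  intro i h1 h2
  rw [getElem_unstairL _ _ _ (by simpa using h2), getElem_stairL _ _ _ (by simpa using h2)]
  omega

theorem stair_unstair (s : ℕ) (l : List ℕ) (hl : ∀ (i : ℕ) (h : i < l.length), s + 2 * i ≤ l[i]) :
    stairL s (unstairL s l) = l := by
  apply List.ext_getElem (by simp)
  intro i h1 h2
  rw [getElem_stairL _ _ _ (by simpa using h1), getElem_unstairL _ _ _ (by simpa using h1)]
  have := hl i h2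
  omega

theorem sum_map_two (l : List ℕ) : (l.map (fun x => 2 * x)).sum = 2 * l.sum := by
  induction l with
  | nil => rfl
  | cons a t ih => simp [ih]; ring

theorem sum_stairL_three (l : List ℕ) :
    (stairL 3 l).sum = l.sum + l.length * (l.length + 2) := by
  rw [sum_stairL]
  cases l.length with
  | zero => simp
  | succ c => simp only [Nat.succ_sub_one]; ring

theorem sum_stairL_one (l : List ℕ) :
    (stairL 1 l).sum = l.sum + l.length * l.length := by
  rw [sum_stairL]
  cases l.length with
  | zero => simp
  | succ c => simp only [Nat.succ_sub_one]; ring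

/-- encoder for the first (A) family -/
def encA (u g : List ℕ) : Multiset ℕ :=
  (↑(stairL 3 (u.map (fun x => 2 * x))) : Multiset ℕ) +
    ↑(g.map (fun x => 2 * x + 2 * (u.length + g.length + 1)))

/-- encoder for the second (B) family -/
def encB (u g : List ℕ) : Multiset ℕ :=
  ↑(stairL 3 (Multiset.sort
    ((↑(u.map (fun x => 2 * x)) : Multiset ℕ) + ↑(stairL 1 (g.map (fun x => 2 * x)))) (· ≤ ·)))

/-- common weight -/
def weight (u g : List ℕ) : ℕ :=
  2 * (u.sum + g.sum) + (u.length + g.length) * (u.length + g.length + 2) +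
    g.length * g.length

@[simp] theorem card_encA (u g : List ℕ) : Multiset.card (encA u g) = u.length + g.length := by
  simp [encA]

@[simp] theorem card_encB (u g : List ℕ) : Multiset.card (encB u g) = u.length + g.length := by
  simp [encB]

theorem sum_map_affine (l : List ℕ) (c : ℕ) :
    (l.map (fun x => 2 * x + c)).sum = 2 * l.sum + l.length * c := by
  induction l with
  | nil => simp
  | cons a t ih => simp [ih]; ring

theorem sum_encA (u g : List ℕ) : (encA u g).sum = weight u g := by
  simp only [encA, Multiset.sum_add, Multiset.sum_coe, weight]
  rw [sum_stairL_three, sum_map_two, sum_map_affine]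
  simp only [List.length_map, length_stairL]
  ring

theorem sort_sum (s : Multiset ℕ) : (Multiset.sort s (· ≤ ·)).sum = s.sum := by
  rw [← Multiset.sum_coe, Multiset.sort_eq]

theorem sort_length (s : Multiset ℕ) : (Multiset.sort s (· ≤ ·)).length = Multiset.card s := by
  rw [← Multiset.coe_card, Multiset.sort_eq]

theorem sum_encB (u g : List ℕ) : (encB u g).sum = weight u g := by
  simp only [encB, Multiset.sum_coe, weight]
  rw [sum_stairL_three, sort_sum, sort_length]
  simp only [Multiset.sum_add, Multiset.sum_coe, Multiset.card_add, Multiset.coe_card,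
    List.length_map, length_stairL]
  rw [sum_map_two, sum_stairL_one, sum_map_two]
  simp only [List.length_map]
  ring

theorem getElem_ne_of_count_le_one {l : List ℕ} {i j : ℕ} (hi : i < l.length)
    (hj : j < l.length) (hij : i ≠ j) (h : l.count l[i] ≤ 1) : l[i] ≠ l[j] := by
  intro he
  have hd : l.Duplicate l[i] := by
    rcases Nat.lt_or_ge i j with hlt | hge
    · exact List.duplicate_iff_exists_distinct_get.mpr
        ⟨⟨i, hi⟩, ⟨j, hj⟩, hlt, by simp, by simp [he]⟩
    · have hlt : j < i := lt_of_le_of_ne hge (Ne.symm hij)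
      exact List.duplicate_iff_exists_distinct_get.mpr
        ⟨⟨j, hj⟩, ⟨i, hi⟩, hlt, by simp [he], by simp⟩
  have := List.duplicate_iff_two_le_count.mp hd
  omega

/-- elements of a stairL over doubled list, membership characterization -/
theorem mem_stairL_map_two {x s : ℕ} {u : List ℕ} :
    x ∈ stairL s (u.map (fun y => 2 * y)) ↔
      ∃ (i : ℕ) (h : i < u.length), x = 2 * u[i] + s + 2 * i := by
  rw [List.mem_iff_getElem]
  constructor
  · rintro ⟨i, h, rfl⟩
    have hi : i < u.length := by simpa using h
    refine ⟨i, hi, ?_⟩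
    rw [getElem_stairL _ _ _ (by simpa using h)]
    simp
  · rintro ⟨i, hi, rfl⟩
    refine ⟨i, by simpa using hi, ?_⟩
    rw [getElem_stairL _ _ _ (by simpa using hi)]
    simp

theorem stairL_pairwise {l : List ℕ} (hl : l.Pairwise (· ≤ ·)) (s : ℕ) :
    (stairL s l).Pairwise (fun a b => a + 2 ≤ b) := by
  rw [List.pairwise_iff_getElem]
  intro i j hi hj hij
  rw [List.pairwise_iff_getElem] at hl
  have hi' : i < l.length := by simpa using hi
  have hj' : j < l.length := by simpa using hj
  rw [getElem_stairL _ _ _ hi', getElem_stairL _ _ _ hj']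
  have := hl i j hi' hj' hij
  omega

theorem stairL_nodup {l : List ℕ} (hl : l.Pairwise (· ≤ ·)) (s : ℕ) :
    (stairL s l).Nodup :=
  (stairL_pairwise hl s).imp (by omega)

theorem encA_props (u g : List ℕ) (hu : u.Pairwise (· ≤ ·)) :
    distinctOddParts (encA u g) ∧ minOddGe (encA u g) 3 ∧
      minEvenGe (encA u g) (2 * (Multiset.card (encA u g) + 1)) ∧
      ∀ a ∈ encA u g, a ≠ 0 := by
  have hmemg : ∀ a ∈ g.map (fun x => 2 * x + 2 * (u.length + g.length + 1)), Even a := by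
    intro a ha
    rw [List.mem_map] at ha
    obtain ⟨x, -, rfl⟩ := ha
    exact ⟨x + (u.length + g.length + 1), by ring⟩
  have hmems : ∀ a ∈ stairL 3 (u.map (fun y => 2 * y)), Odd a ∧ 3 ≤ a := by
    intro a ha
    rw [mem_stairL_map_two] at ha
    obtain ⟨i, hi, rfl⟩ := ha
    exact ⟨⟨u[i] + i + 1, by ring⟩, by omega⟩
  have hmap : (u.map (fun y => 2 * y)).Pairwise (· ≤ ·) := by
    apply List.Pairwise.map _ _ hu
    intro a b h
    omega
  refine ⟨?_, ?_, ?_, ?_⟩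
  · intro a ha
    rw [encA, Multiset.count_add, Multiset.coe_count, Multiset.coe_count]
    have h1 : (stairL 3 (u.map (fun y => 2 * y))).count a ≤ 1 :=
      List.nodup_iff_count_le_one.mp (stairL_nodup hmap 3) a
    have h2 : (g.map (fun x => 2 * x + 2 * (u.length + g.length + 1))).count a = 0 := by
      rw [List.count_eq_zero]
      intro hmem
      exact (Nat.not_even_iff_odd.mpr ha) (hmemg a hmem)
    omega
  · intro a ha hodd
    rw [encA, Multiset.mem_add, Multiset.mem_coe, Multiset.mem_coe] at ha
    rcases ha with ha | ha
    · exact (hmems a ha).2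
    · exact absurd (hmemg a ha) (Nat.not_even_iff_odd.mpr hodd)
  · intro a ha heven
    rw [encA, Multiset.mem_add, Multiset.mem_coe, Multiset.mem_coe] at ha
    rcases ha with ha | ha
    · exact absurd heven (Nat.not_even_iff_odd.mpr (hmems a ha).1)
    · rw [List.mem_map] at ha
      obtain ⟨x, -, rfl⟩ := ha
      rw [card_encA]
      omega
  · intro a ha
    rw [encA, Multiset.mem_add, Multiset.mem_coe, Multiset.mem_coe] at ha
    rcases ha with ha | ha
    · have := (hmems a ha).2; omega
    · rw [List.mem_map] at ha
      obtain ⟨x, -, rfl⟩ := ha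
      omega

theorem encB_props (u g : List ℕ) (hg : g.Pairwise (· ≤ ·)) :
    (∀ a ∈ encB u g, 3 ≤ a) ∧ gapCond (encB u g) := by
  set M : Multiset ℕ :=
    (↑(u.map (fun x => 2 * x)) : Multiset ℕ) + ↑(stairL 1 (g.map (fun x => 2 * x))) with hM
  set L0 : List ℕ := Multiset.sort M (· ≤ ·) with hL0
  have hL0s : L0.Pairwise (· ≤ ·) := Multiset.pairwise_sort _ _
  have hgmap : (g.map (fun y => 2 * y)).Pairwise (· ≤ ·) := by
    apply List.Pairwise.map _ _ hg
    intro a b h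
    omega
  have hcount : ∀ a, Odd a → L0.count a ≤ 1 := by
    intro a ha
    have : L0.count a = M.count a := by
      rw [← Multiset.coe_count, hL0, Multiset.sort_eq]
    rw [this, hM, Multiset.count_add, Multiset.coe_count, Multiset.coe_count]
    have h1 : (u.map (fun x => 2 * x)).count a = 0 := by
      rw [List.count_eq_zero]
      intro hmem
      rw [List.mem_map] at hmem
      obtain ⟨x, -, rfl⟩ := hmem
      exact (Nat.not_even_iff_odd.mpr ha) ⟨x, by ring⟩
    have h2 : (stairL 1 (g.map (fun x => 2 * x))).count a ≤ 1 :=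
      List.nodup_iff_count_le_one.mp (stairL_nodup hgmap 1) a
    omega
  have hL0get : ∀ i j (hi : i < L0.length) (hj : j < L0.length), i < j →
      L0[i] ≤ L0[j] ∧ (Odd L0[i] → Odd L0[j] → L0[i] + 2 ≤ L0[j]) := by
    intro i j hi hj hij
    have hle : L0[i] ≤ L0[j] := by
      rw [List.pairwise_iff_getElem] at hL0s
      exact hL0s i j hi hj hij
    refine ⟨hle, fun ho1 ho2 => ?_⟩
    have hne : L0[i] ≠ L0[j] :=
      getElem_ne_of_count_le_one hi hj (by omega) (hcount _ ho1)
    rw [Nat.odd_iff] at ho1 ho2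
    omega
  have hget : ∀ a ∈ encB u g, ∃ (i : ℕ) (hi : i < L0.length), a = L0[i] + 3 + 2 * i := by
    intro a ha
    rw [encB, Multiset.mem_coe, List.mem_iff_getElem] at ha
    obtain ⟨i, hi, rfl⟩ := ha
    have hi' : i < L0.length := by rw [length_stairL] at hi; exact hi
    exact ⟨i, hi', by rw [getElem_stairL _ _ _ hi']⟩
  have hfind : ∀ a ∈ encB u g, ∀ b ∈ encB u g, a < b →
      ∃ (i j : ℕ) (hi : i < L0.length) (hj : j < L0.length), i < j ∧
        a = L0[i] + 3 + 2 * i ∧ b = L0[j] + 3 + 2 * j := by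
    intro a ha b hb hab
    obtain ⟨i, hi, rfl⟩ := hget a ha
    obtain ⟨j, hj, rfl⟩ := hget b hb
    have hij : i < j := by
      by_contra hc
      rcases Nat.lt_or_ge j i with hlt | hge
      · have := (hL0get j i hj hi hlt).1
        omega
      · have : i = j := by omega
        subst this
        omega
    exact ⟨i, j, hi, hj, hij, rfl, rfl⟩
  constructor
  · intro a ha
    obtain ⟨i, hi, rfl⟩ := hget a ha
    omega
  refine ⟨?_, ?_, ?_⟩
  · intro a
    rw [encB, Multiset.coe_count]
    exact List.nodup_iff_count_le_one.mp (stairL_nodup hL0s 3) a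
  · intro a ha b hb hab
    obtain ⟨i, j, hi, hj, hij, rfl, rfl⟩ := hfind a ha b hb hab
    have := (hL0get i j hi hj hij).1
    omega
  · intro a ha b hb hea heb hab
    obtain ⟨i, j, hi, hj, hij, rfl, rfl⟩ := hfind a ha b hb hab
    rw [Nat.even_iff] at hea heb
    have h1 : Odd L0[i] := by rw [Nat.odd_iff]; omega
    have h2 : Odd L0[j] := by rw [Nat.odd_iff]; omega
    have := (hL0get i j hi hj hij).2 h1 h2
    omega

theorem gap_bound {L : List ℕ}
    (h : ∀ i j (hi : i < L.length) (hj : j < L.length), i < j → L[i] + 2 ≤ L[j])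
    {i j : ℕ} (hj : j < L.length) (hij : i ≤ j) :
    L[i]'(by omega) + 2 * (j - i) ≤ L[j] := by
  induction j, hij using Nat.le_induction with
  | base => simp
  | succ k hk ih =>
    have h1 := ih (by omega)
    have h2 := h k (k + 1) (by omega) hj (by omega)
    omega

theorem surjA {m : Multiset ℕ} (h1 : distinctOddParts m) (h2 : minOddGe m 3)
    (h3 : minEvenGe m (2 * (Multiset.card m + 1))) :
    ∃ u g : List ℕ, u.Pairwise (· ≤ ·) ∧ g.Pairwise (· ≤ ·) ∧ encA u g = m := by
  classical
  set O : List ℕ := Multiset.sort (m.filter (fun a => Odd a)) (· ≤ ·) with hO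
  set E : List ℕ := Multiset.sort (m.filter (fun a => Even a)) (· ≤ ·) with hE
  have hOmem : ∀ a ∈ O, Odd a ∧ 3 ≤ a := by
    intro a ha
    rw [hO, Multiset.mem_sort, Multiset.mem_filter] at ha
    exact ⟨ha.2, h2 a ha.1 ha.2⟩
  have hEmem : ∀ a ∈ E, Even a ∧ 2 * Multiset.card m + 2 ≤ a := by
    intro a ha
    rw [hE, Multiset.mem_sort, Multiset.mem_filter] at ha
    have := h3 a ha.1 ha.2
    exact ⟨ha.2, by omega⟩
  have hOsorted : O.Pairwise (· ≤ ·) := Multiset.pairwise_sort _ _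
  have hEsorted : E.Pairwise (· ≤ ·) := Multiset.pairwise_sort _ _
  have hOcount : ∀ a, Odd a → O.count a ≤ 1 := by
    intro a ha
    have : O.count a = (m.filter (fun a => Odd a)).count a := by
      rw [← Multiset.coe_count, hO, Multiset.sort_eq]
    rw [this, Multiset.count_filter]
    simp only [ha, if_true]
    exact h1 a ha
  have hOgap : ∀ i j (hi : i < O.length) (hj : j < O.length), i < j → O[i] + 2 ≤ O[j] := by
    intro i j hi hj hij
    have hle : O[i] ≤ O[j] := by
      rw [List.pairwise_iff_getElem] at hOsorted
      exact hOsorted i j hi hj hij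
    have ho1 := (hOmem O[i] (List.getElem_mem hi)).1
    have ho2 := (hOmem O[j] (List.getElem_mem hj)).1
    have hne : O[i] ≠ O[j] := getElem_ne_of_count_le_one hi hj (by omega) (hOcount _ ho1)
    rw [Nat.odd_iff] at ho1 ho2
    omega
  have hOpos : ∀ i (hi : i < O.length), 3 + 2 * i ≤ O[i] := by
    intro i hi
    have h0 : (3 : ℕ) ≤ O[0]'(by omega) :=
      (hOmem _ (List.getElem_mem (by omega))).2
    have := gap_bound hOgap hi (Nat.zero_le i)
    omega
  set u : List ℕ := (unstairL 3 O).map (fun x => x / 2) with hu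
  set c : ℕ := 2 * Multiset.card m + 2 with hc
  set g : List ℕ := E.map (fun x => (x - c) / 2) with hg
  have hgu2 : u.map (fun x => 2 * x) = unstairL 3 O := by
    apply List.ext_getElem (by simp [hu])
    intro i hh1 hh2
    have hi : i < O.length := by simpa using hh2
    simp only [hu, List.getElem_map]
    rw [getElem_unstairL _ _ _ hi]
    have hodd := (hOmem O[i] (List.getElem_mem hi)).1
    have hp := hOpos i hi
    rw [Nat.odd_iff] at hodd
    omega
  have hstair : stairL 3 (u.map (fun x => 2 * x)) = O := by
    rw [hgu2]
    exact stair_unstair 3 O (fun i h => by have := hOpos i h; omega)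
  have husorted : u.Pairwise (· ≤ ·) := by
    rw [List.pairwise_iff_getElem]
    intro i j hi hj hij
    have hi' : i < O.length := by simpa [hu] using hi
    have hj' : j < O.length := by simpa [hu] using hj
    simp only [hu, List.getElem_map]
    rw [getElem_unstairL _ _ _ hi', getElem_unstairL _ _ _ hj']
    have := gap_bound hOgap hj' (le_of_lt hij)
    omega
  have hgsorted : g.Pairwise (· ≤ ·) := by
    rw [List.pairwise_iff_getElem]
    intro i j hi hj hij
    have hi' : i < E.length := by simpa [hg] using hi
    have hj' : j < E.length := by simpa [hg] using hj
    simp only [hg, List.getElem_map]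
    have hle : E[i] ≤ E[j] := by
      rw [List.pairwise_iff_getElem] at hEsorted
      exact hEsorted i j hi' hj' hij
    omega
  have hlen : u.length + g.length = Multiset.card m := by
    have hsplit := Multiset.filter_add_not (fun a => Odd a) m
    have hcongr : m.filter (fun a => ¬ Odd a) = m.filter (fun a => Even a) :=
      Multiset.filter_congr (fun x _ => by simp [Nat.not_odd_iff_even])
    have := congrArg Multiset.card hsplit
    rw [Multiset.card_add, hcongr] at this
    have hOlen : O.length = Multiset.card (m.filter (fun a => Odd a)) := sort_length _
    have hElen : E.length = Multiset.card (m.filter (fun a => Even a)) := sort_length _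
    simp only [hu, hg, List.length_map, length_unstairL]
    omega
  have hgmap : g.map (fun x => 2 * x + 2 * (u.length + g.length + 1)) = E := by
    apply List.ext_getElem (by simp [hg])
    intro i hh1 hh2
    have hi : i < E.length := by simpa using hh2
    simp only [hg, List.getElem_map, List.map_map]
    have hev := (hEmem E[i] (List.getElem_mem hi)).1
    have hge := (hEmem E[i] (List.getElem_mem hi)).2
    rw [Nat.even_iff] at hev
    simp only [Function.comp]
    have hlen2 : u.length + (List.map (fun x => (x - c) / 2) E).length = Multiset.card m := hlen
    have hcc : c = 2 * Multiset.card m + 2 := hc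
    omega
  refine ⟨u, g, husorted, hgsorted, ?_⟩
  rw [encA, hstair, hgmap, hO, hE, Multiset.sort_eq, Multiset.sort_eq]
  have hcongr : m.filter (fun a => ¬ Odd a) = m.filter (fun a => Even a) :=
    Multiset.filter_congr (fun x _ => by simp [Nat.not_odd_iff_even])
  rw [← hcongr]
  exact Multiset.filter_add_not _ m

theorem surjB {m : Multiset ℕ} (h1 : ∀ a ∈ m, 3 ≤ a) (h2 : gapCond m) :
    ∃ u g : List ℕ, u.Pairwise (· ≤ ·) ∧ g.Pairwise (· ≤ ·) ∧ encB u g = m := by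
  classical
  obtain ⟨hc1, hc2, hc3⟩ := h2
  set L : List ℕ := Multiset.sort m (· ≤ ·) with hL
  have hLsorted : L.Pairwise (· ≤ ·) := Multiset.pairwise_sort _ _
  have hLmem : ∀ a ∈ L, a ∈ m := by
    intro a ha
    rw [hL, Multiset.mem_sort] at ha
    exact ha
  have hLcount : ∀ a, L.count a ≤ 1 := by
    intro a
    have : L.count a = m.count a := by rw [← Multiset.coe_count, hL, Multiset.sort_eq]
    rw [this]; exact hc1 a
  have hLgap : ∀ i j (hi : i < L.length) (hj : j < L.length), i < j → L[i] + 2 ≤ L[j] := by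
    intro i j hi hj hij
    have hle : L[i] ≤ L[j] := by
      rw [List.pairwise_iff_getElem] at hLsorted
      exact hLsorted i j hi hj hij
    have hne : L[i] ≠ L[j] := getElem_ne_of_count_le_one hi hj (by omega) (hLcount _)
    exact hc2 _ (hLmem _ (List.getElem_mem hi)) _ (hLmem _ (List.getElem_mem hj)) (by omega)
  have hLpos : ∀ i (hi : i < L.length), 3 + 2 * i ≤ L[i] := by
    intro i hi
    have h0 : (3 : ℕ) ≤ L[0]'(by omega) := h1 _ (hLmem _ (List.getElem_mem (by omega)))
    have := gap_bound hLgap hi (Nat.zero_le i)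
    omega
  have hEE : ∀ i j (hi : i < L.length) (hj : j < L.length), i < j →
      L[i] % 2 = 0 → L[j] % 2 = 0 → L[i] + 2 * (j - i) + 2 ≤ L[j] := by
    intro i j hi hj hij he1 he2
    have hieq : L[i] < L[j] := by have := hLgap i j hi hj hij; omega
    have h4 : L[i] + 4 ≤ L[j] := hc3 _ (hLmem _ (List.getElem_mem hi)) _
      (hLmem _ (List.getElem_mem hj)) (Nat.even_iff.mpr he1) (Nat.even_iff.mpr he2) hieq
    rcases Nat.lt_or_ge (i + 1) j with hlt | hge
    · have hmid : i + 1 < L.length := by omega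
      have hg1 := hLgap i (i + 1) hi hmid (by omega)
      have hg2 := gap_bound hLgap hj (show i + 1 ≤ j by omega)
      rcases Nat.even_or_odd L[i+1] with hpar | hpar
      · have h4' : L[i] + 4 ≤ L[i+1]'hmid := hc3 _ (hLmem _ (List.getElem_mem hi)) _
          (hLmem _ (List.getElem_mem hmid)) (Nat.even_iff.mpr he1) hpar (by omega)
        omega
      · rw [Nat.odd_iff] at hpar
        omega
    · have : j = i + 1 := by omega
      subst this
      omega
  set C : List ℕ := unstairL 3 L with hC
  have hClen : C.length = L.length := by simp [hC]
  have hCget : ∀ i (hi : i < C.length), C[i] = L[i]'(hClen ▸ hi) - (3 + 2 * i) := by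
    intro i hi
    exact getElem_unstairL 3 L i (hClen ▸ hi) hi
  have hCsorted : C.Pairwise (· ≤ ·) := by
    rw [List.pairwise_iff_getElem]
    intro i j hi hj hij
    rw [hCget i hi, hCget j hj]
    have := gap_bound hLgap (hClen ▸ hj) (le_of_lt hij)
    have := hLpos i (hClen ▸ hi)
    omega
  have hCoddgap : ∀ i j (hi : i < C.length) (hj : j < C.length), i < j →
      Odd C[i] → Odd C[j] → C[i] + 2 ≤ C[j] := by
    intro i j hi hj hij ho1 ho2
    rw [Nat.odd_iff] at ho1 ho2
    rw [hCget i hi] at ho1 ⊢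
    rw [hCget j hj] at ho2 ⊢
    have hp1 := hLpos i (hClen ▸ hi)
    have hp2 := hLpos j (hClen ▸ hj)
    have he1 : L[i]'(hClen ▸ hi) % 2 = 0 := by omega
    have he2 : L[j]'(hClen ▸ hj) % 2 = 0 := by omega
    have := hEE i j (hClen ▸ hi) (hClen ▸ hj) hij he1 he2
    omega
  have hCcount : ∀ a, Odd a → C.count a ≤ 1 := by
    intro a ha
    by_contra hcon
    have hdup : C.Duplicate a := List.duplicate_iff_two_le_count.mpr (by omega)
    obtain ⟨n, mm, hnm, hn, hm⟩ := List.duplicate_iff_exists_distinct_get.mp hdup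
    simp only [List.get_eq_getElem] at hn hm
    have := hCoddgap n mm n.isLt mm.isLt hnm (hn ▸ ha) (hm ▸ ha)
    omega
  set MC : Multiset ℕ := (↑C : Multiset ℕ) with hMC
  set V : List ℕ := Multiset.sort (MC.filter (fun a => Even a)) (· ≤ ·) with hV
  set W : List ℕ := Multiset.sort (MC.filter (fun a => Odd a)) (· ≤ ·) with hW
  have hVmem : ∀ a ∈ V, Even a := by
    intro a ha
    rw [hV, Multiset.mem_sort, Multiset.mem_filter] at ha
    exact ha.2
  have hWmem : ∀ a ∈ W, Odd a := by
    intro a ha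
    rw [hW, Multiset.mem_sort, Multiset.mem_filter] at ha
    exact ha.2
  have hVsorted : V.Pairwise (· ≤ ·) := Multiset.pairwise_sort _ _
  have hWsorted : W.Pairwise (· ≤ ·) := Multiset.pairwise_sort _ _
  have hWcount : ∀ a, Odd a → W.count a ≤ 1 := by
    intro a ha
    have h' : W.count a = (MC.filter (fun a => Odd a)).count a := by
      rw [← Multiset.coe_count, hW, Multiset.sort_eq]
    rw [h', Multiset.count_filter]
    simp only [ha, if_true]
    rw [hMC, Multiset.coe_count]
    exact hCcount a ha
  have hWgap : ∀ i j (hi : i < W.length) (hj : j < W.length), i < j → W[i] + 2 ≤ W[j] := by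
    intro i j hi hj hij
    have hle : W[i] ≤ W[j] := by
      rw [List.pairwise_iff_getElem] at hWsorted
      exact hWsorted i j hi hj hij
    have ho1 := hWmem _ (List.getElem_mem hi)
    have ho2 := hWmem _ (List.getElem_mem hj)
    have hne : W[i] ≠ W[j] := getElem_ne_of_count_le_one hi hj (by omega) (hWcount _ ho1)
    rw [Nat.odd_iff] at ho1 ho2
    omega
  have hWpos : ∀ i (hi : i < W.length), 1 + 2 * i ≤ W[i] := by
    intro i hi
    have h0 : Odd (W[0]'(by omega)) := hWmem _ (List.getElem_mem (by omega))
    rw [Nat.odd_iff] at h0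
    have := gap_bound hWgap hi (Nat.zero_le i)
    omega
  set u : List ℕ := V.map (fun x => x / 2) with hu
  set g : List ℕ := (unstairL 1 W).map (fun x => x / 2) with hg
  have hu2 : u.map (fun x => 2 * x) = V := by
    apply List.ext_getElem (by simp [hu])
    intro i hh1 hh2
    have hi : i < V.length := by simpa [hu] using hh1
    simp only [hu, List.getElem_map]
    have hev := hVmem _ (List.getElem_mem hi)
    rw [Nat.even_iff] at hev
    omega
  have hg2 : stairL 1 (g.map (fun x => 2 * x)) = W := by
    have : g.map (fun x => 2 * x) = unstairL 1 W := by
      apply List.ext_getElem (by simp [hg])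
      intro i hh1 hh2
      have hi : i < W.length := by simpa [hg] using hh1
      simp only [hg, List.getElem_map]
      rw [getElem_unstairL _ _ _ hi]
      have hod := hWmem _ (List.getElem_mem hi)
      have hp := hWpos i hi
      rw [Nat.odd_iff] at hod
      omega
    rw [this]
    exact stair_unstair 1 W (fun i h => by have := hWpos i h; omega)
  have husorted : u.Pairwise (· ≤ ·) := by
    rw [List.pairwise_iff_getElem]
    intro i j hi hj hij
    have hi' : i < V.length := by simpa [hu] using hi
    have hj' : j < V.length := by simpa [hu] using hj
    simp only [hu, List.getElem_map]
    have hle : V[i] ≤ V[j] := by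
      rw [List.pairwise_iff_getElem] at hVsorted
      exact hVsorted i j hi' hj' hij
    omega
  have hgsorted : g.Pairwise (· ≤ ·) := by
    rw [List.pairwise_iff_getElem]
    intro i j hi hj hij
    have hi' : i < W.length := by simpa [hg] using hi
    have hj' : j < W.length := by simpa [hg] using hj
    simp only [hg, List.getElem_map]
    rw [getElem_unstairL _ _ _ hi', getElem_unstairL _ _ _ hj']
    have := gap_bound hWgap hj' (le_of_lt hij)
    omega
  refine ⟨u, g, husorted, hgsorted, ?_⟩
  rw [encB, hu2, hg2]
  have hmerge : ((↑V : Multiset ℕ) + ↑W) = MC := by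
    rw [hV, hW, Multiset.sort_eq, Multiset.sort_eq]
    have hcongr : MC.filter (fun a => ¬ Even a) = MC.filter (fun a => Odd a) :=
      Multiset.filter_congr (fun x _ => by simp [Nat.not_even_iff_odd])
    rw [← hcongr]
    exact Multiset.filter_add_not _ MC
  rw [hmerge]
  have hsortMC : Multiset.sort MC (· ≤ ·) = C := by
    apply List.Perm.eq_of_pairwise' (Multiset.pairwise_sort _ _) hCsorted
    rw [← Multiset.coe_eq_coe, Multiset.sort_eq]
  rw [hsortMC, hC]
  rw [stair_unstair 3 L (fun i h => by have := hLpos i h; omega)]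
  rw [hL, Multiset.sort_eq]

theorem coe_eq_of_sorted {l1 l2 : List ℕ} (h : (↑l1 : Multiset ℕ) = ↑l2)
    (s1 : l1.Pairwise (· ≤ ·)) (s2 : l2.Pairwise (· ≤ ·)) : l1 = l2 :=
  List.Perm.eq_of_pairwise' s1 s2 (Multiset.coe_eq_coe.mp h)

theorem sorted_map_two {l : List ℕ} (h : l.Pairwise (· ≤ ·)) :
    (l.map (fun x => 2 * x)).Pairwise (· ≤ ·) := by
  apply List.Pairwise.map _ _ h
  intro a b hab
  show 2 * a ≤ 2 * b
  omega

theorem sorted_stairL {l : List ℕ} (h : l.Pairwise (· ≤ ·)) (s : ℕ) :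
    (stairL s l).Pairwise (· ≤ ·) :=
  (stairL_pairwise h s).imp (by omega)

theorem map_two_inj {u u' : List ℕ} (h : u.map (fun x => 2 * x) = u'.map (fun x => 2 * x)) :
    u = u' := by
  have : Function.Injective (fun x : ℕ => 2 * x) := by
    intro a b hab
    have h2 : 2 * a = 2 * b := hab
    omega
  exact List.map_injective_iff.mpr this h

theorem filter_odd_encA (u g : List ℕ) :
    (encA u g).filter (fun a => Odd a) = ↑(stairL 3 (u.map (fun x => 2 * x))) := by
  rw [encA, Multiset.filter_add]
  have h1 : (↑(stairL 3 (u.map (fun x => 2 * x))) : Multiset ℕ).filter (fun a => Odd a)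
      = ↑(stairL 3 (u.map (fun x => 2 * x))) := by
    rw [Multiset.filter_eq_self]
    intro a ha
    rw [Multiset.mem_coe, mem_stairL_map_two] at ha
    obtain ⟨i, hi, rfl⟩ := ha
    exact ⟨u[i] + i + 1, by ring⟩
  have h2 : (↑(g.map (fun x => 2 * x + 2 * (u.length + g.length + 1))) : Multiset ℕ).filter
      (fun a => Odd a) = 0 := by
    rw [Multiset.filter_eq_nil]
    intro a ha
    rw [Multiset.mem_coe, List.mem_map] at ha
    obtain ⟨x, -, rfl⟩ := ha
    rw [Nat.not_odd_iff_even]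
    exact ⟨x + (u.length + g.length + 1), by ring⟩
  rw [h1, h2, add_zero]

theorem filter_even_encA (u g : List ℕ) :
    (encA u g).filter (fun a => Even a)
      = ↑(g.map (fun x => 2 * x + 2 * (u.length + g.length + 1))) := by
  rw [encA, Multiset.filter_add]
  have h1 : (↑(stairL 3 (u.map (fun x => 2 * x))) : Multiset ℕ).filter (fun a => Even a)
      = 0 := by
    rw [Multiset.filter_eq_nil]
    intro a ha
    rw [Multiset.mem_coe, mem_stairL_map_two] at ha
    obtain ⟨i, hi, rfl⟩ := ha
    rw [Nat.not_even_iff_odd]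
    exact ⟨u[i] + i + 1, by ring⟩
  have h2 : (↑(g.map (fun x => 2 * x + 2 * (u.length + g.length + 1))) : Multiset ℕ).filter
      (fun a => Even a) = ↑(g.map (fun x => 2 * x + 2 * (u.length + g.length + 1))) := by
    rw [Multiset.filter_eq_self]
    intro a ha
    rw [Multiset.mem_coe, List.mem_map] at ha
    obtain ⟨x, -, rfl⟩ := ha
    exact ⟨x + (u.length + g.length + 1), by ring⟩
  rw [h1, h2, zero_add]

theorem injA {u g u' g' : List ℕ} (hu : u.Pairwise (· ≤ ·)) (hg : g.Pairwise (· ≤ ·))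
    (hu' : u'.Pairwise (· ≤ ·)) (hg' : g'.Pairwise (· ≤ ·))
    (h : encA u g = encA u' g') : u = u' ∧ g = g' := by
  have hodd : (↑(stairL 3 (u.map (fun x => 2 * x))) : Multiset ℕ)
      = ↑(stairL 3 (u'.map (fun x => 2 * x))) := by
    rw [← filter_odd_encA, ← filter_odd_encA, h]
  have hlists : stairL 3 (u.map (fun x => 2 * x)) = stairL 3 (u'.map (fun x => 2 * x)) :=
    coe_eq_of_sorted hodd (sorted_stairL (sorted_map_two hu) 3)
      (sorted_stairL (sorted_map_two hu') 3)
  have hueq : u = u' := by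
    apply map_two_inj
    have := congrArg (unstairL 3) hlists
    rwa [unstair_stair, unstair_stair] at this
  subst hueq
  have hcard : u.length + g.length = u.length + g'.length := by
    have := congrArg Multiset.card h
    rwa [card_encA, card_encA] at this
  have hglen : g.length = g'.length := by omega
  have heven : (↑(g.map (fun x => 2 * x + 2 * (u.length + g.length + 1))) : Multiset ℕ)
      = ↑(g'.map (fun x => 2 * x + 2 * (u.length + g'.length + 1))) := by
    rw [← filter_even_encA, ← filter_even_encA, h]
  rw [← hglen] at heven
  have hglists : g.map (fun x => 2 * x + 2 * (u.length + g.length + 1))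
      = g'.map (fun x => 2 * x + 2 * (u.length + g.length + 1)) := by
    apply coe_eq_of_sorted heven
    · apply List.Pairwise.map _ _ hg
      intro a b hab
      show 2 * a + 2 * (u.length + g.length + 1) ≤ 2 * b + 2 * (u.length + g.length + 1)
      omega
    · apply List.Pairwise.map _ _ hg'
      intro a b hab
      show 2 * a + 2 * (u.length + g.length + 1) ≤ 2 * b + 2 * (u.length + g.length + 1)
      omega
  have : Function.Injective (fun x : ℕ => 2 * x + 2 * (u.length + g.length + 1)) := by
    intro a b hab
    have h2 : 2 * a + 2 * (u.length + g.length + 1) = 2 * b + 2 * (u.length + g.length + 1) := hab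
    omega
  exact ⟨rfl, List.map_injective_iff.mpr this hglists⟩

theorem injB {u g u' g' : List ℕ} (hu : u.Pairwise (· ≤ ·)) (hg : g.Pairwise (· ≤ ·))
    (hu' : u'.Pairwise (· ≤ ·)) (hg' : g'.Pairwise (· ≤ ·))
    (h : encB u g = encB u' g') : u = u' ∧ g = g' := by
  set M : Multiset ℕ :=
    (↑(u.map (fun x => 2 * x)) : Multiset ℕ) + ↑(stairL 1 (g.map (fun x => 2 * x))) with hM
  set M' : Multiset ℕ :=
    (↑(u'.map (fun x => 2 * x)) : Multiset ℕ) + ↑(stairL 1 (g'.map (fun x => 2 * x))) with hM'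
  have hMeq : M = M' := by
    have hls : stairL 3 (Multiset.sort M (· ≤ ·)) = stairL 3 (Multiset.sort M' (· ≤ ·)) := by
      apply coe_eq_of_sorted h (sorted_stairL (Multiset.pairwise_sort _ _) 3)
        (sorted_stairL (Multiset.pairwise_sort _ _) 3)
    have := congrArg (unstairL 3) hls
    rw [unstair_stair, unstair_stair] at this
    calc M = ↑(Multiset.sort M (· ≤ ·)) := (Multiset.sort_eq _ _).symm
    _ = ↑(Multiset.sort M' (· ≤ ·)) := by rw [this]
    _ = M' := Multiset.sort_eq _ _
  have hfilterE : ∀ (v w : List ℕ),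
      ((↑(v.map (fun x => 2 * x)) : Multiset ℕ) + ↑(stairL 1 (w.map (fun x => 2 * x)))).filter
        (fun a => Even a) = ↑(v.map (fun x => 2 * x)) := by
    intro v w
    rw [Multiset.filter_add]
    have h1 : (↑(v.map (fun x => 2 * x)) : Multiset ℕ).filter (fun a => Even a)
        = ↑(v.map (fun x => 2 * x)) := by
      rw [Multiset.filter_eq_self]
      intro a ha
      rw [Multiset.mem_coe, List.mem_map] at ha
      obtain ⟨x, -, rfl⟩ := ha
      exact ⟨x, by ring⟩
    have h2 : (↑(stairL 1 (w.map (fun x => 2 * x))) : Multiset ℕ).filter (fun a => Even a)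
        = 0 := by
      rw [Multiset.filter_eq_nil]
      intro a ha
      rw [Multiset.mem_coe, mem_stairL_map_two] at ha
      obtain ⟨i, hi, rfl⟩ := ha
      rw [Nat.not_even_iff_odd]
      exact ⟨w[i] + i, by ring⟩
    rw [h1, h2, add_zero]
  have hfilterO : ∀ (v w : List ℕ),
      ((↑(v.map (fun x => 2 * x)) : Multiset ℕ) + ↑(stairL 1 (w.map (fun x => 2 * x)))).filter
        (fun a => Odd a) = ↑(stairL 1 (w.map (fun x => 2 * x))) := by
    intro v w
    rw [Multiset.filter_add]
    have h1 : (↑(v.map (fun x => 2 * x)) : Multiset ℕ).filter (fun a => Odd a) = 0 := by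
      rw [Multiset.filter_eq_nil]
      intro a ha
      rw [Multiset.mem_coe, List.mem_map] at ha
      obtain ⟨x, -, rfl⟩ := ha
      rw [Nat.not_odd_iff_even]
      exact ⟨x, by ring⟩
    have h2 : (↑(stairL 1 (w.map (fun x => 2 * x))) : Multiset ℕ).filter (fun a => Odd a)
        = ↑(stairL 1 (w.map (fun x => 2 * x))) := by
      rw [Multiset.filter_eq_self]
      intro a ha
      rw [Multiset.mem_coe, mem_stairL_map_two] at ha
      obtain ⟨i, hi, rfl⟩ := ha
      exact ⟨w[i] + i, by ring⟩
    rw [h1, h2, zero_add]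
  constructor
  · apply map_two_inj
    apply coe_eq_of_sorted _ (sorted_map_two hu) (sorted_map_two hu')
    have := congrArg (Multiset.filter (fun a => Even a)) hMeq
    rwa [hM, hM', hfilterE, hfilterE] at this
  · apply map_two_inj
    have hst : stairL 1 (g.map (fun x => 2 * x)) = stairL 1 (g'.map (fun x => 2 * x)) := by
      apply coe_eq_of_sorted _ (sorted_stairL (sorted_map_two hg) 1)
        (sorted_stairL (sorted_map_two hg') 1)
      have := congrArg (Multiset.filter (fun a => Odd a)) hMeq
      rwa [hM, hM', hfilterO, hfilterO] at this
    have := congrArg (unstairL 1) hst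
    rwa [unstair_stair, unstair_stair] at this

/-- the common index set -/
def DSet (n : ℕ) : Set (List ℕ × List ℕ) :=
  {ug | ug.1.Pairwise (· ≤ ·) ∧ ug.2.Pairwise (· ≤ ·) ∧ weight ug.1 ug.2 = n}

theorem cardA (n : ℕ) :
    {p : n.Partition | distinctOddParts p.parts ∧ minOddGe p.parts 3 ∧
      minEvenGe p.parts (2 * (Multiset.card p.parts + 1))}.ncard = (DSet n).ncard := by
  set SA : Set (Multiset ℕ) := {m | (distinctOddParts m ∧ minOddGe m 3 ∧
    minEvenGe m (2 * (Multiset.card m + 1))) ∧ m.sum = n ∧ ∀ a ∈ m, a ≠ 0} with hSA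
  have h1 : (fun p : n.Partition => p.parts) '' {p : n.Partition | distinctOddParts p.parts ∧
      minOddGe p.parts 3 ∧ minEvenGe p.parts (2 * (Multiset.card p.parts + 1))} = SA := by
    ext m
    constructor
    · rintro ⟨p, hp, rfl⟩
      exact ⟨hp, p.parts_sum, fun a ha => by have := p.parts_pos ha; omega⟩
    · rintro ⟨hcond, hsum, hpos⟩
      exact ⟨⟨m, fun {i} hi => by have := hpos i hi; omega, hsum⟩, hcond, rfl⟩
  have h2 : (fun ug : List ℕ × List ℕ => encA ug.1 ug.2) '' DSet n = SA := by
    ext m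
    constructor
    · rintro ⟨⟨u, g⟩, ⟨hu, hg, hw⟩, rfl⟩
      obtain ⟨c1, c2, c3, c4⟩ := encA_props u g hu
      exact ⟨⟨c1, c2, c3⟩, by rw [sum_encA]; exact hw, c4⟩
    · rintro ⟨⟨c1, c2, c3⟩, hsum, hpos⟩
      obtain ⟨u, g, hu, hg, henc⟩ := surjA c1 c2 c3
      exact ⟨(u, g), ⟨hu, hg, by rw [← sum_encA u g, henc]; exact hsum⟩, henc⟩
  calc {p : n.Partition | distinctOddParts p.parts ∧ minOddGe p.parts 3 ∧
      minEvenGe p.parts (2 * (Multiset.card p.parts + 1))}.ncard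
      = ((fun p : n.Partition => p.parts) '' {p : n.Partition | distinctOddParts p.parts ∧
        minOddGe p.parts 3 ∧ minEvenGe p.parts (2 * (Multiset.card p.parts + 1))}).ncard := by
        rw [Set.ncard_image_of_injOn]
        intro p hp q hq hpq
        exact Nat.Partition.ext hpq
    _ = SA.ncard := by rw [h1]
    _ = ((fun ug : List ℕ × List ℕ => encA ug.1 ug.2) '' DSet n).ncard := by rw [h2]
    _ = (DSet n).ncard := by
        rw [Set.ncard_image_of_injOn]
        rintro ⟨u, g⟩ ⟨hu, hg, -⟩ ⟨u', g'⟩ ⟨hu', hg', -⟩ h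
        obtain ⟨e1, e2⟩ := injA hu hg hu' hg' h
        simp only [Prod.mk.injEq]
        exact ⟨e1, e2⟩

theorem cardB (n : ℕ) :
    {p : n.Partition | (∀ a ∈ p.parts, 3 ≤ a) ∧ gapCond p.parts}.ncard = (DSet n).ncard := by
  set SB : Set (Multiset ℕ) := {m | ((∀ a ∈ m, 3 ≤ a) ∧ gapCond m) ∧ m.sum = n} with hSB
  have h1 : (fun p : n.Partition => p.parts) '' {p : n.Partition | (∀ a ∈ p.parts, 3 ≤ a) ∧
      gapCond p.parts} = SB := by
    ext m
    constructor
    · rintro ⟨p, hp, rfl⟩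
      exact ⟨hp, p.parts_sum⟩
    · rintro ⟨hcond, hsum⟩
      exact ⟨⟨m, fun {i} hi => by have := hcond.1 i hi; omega, hsum⟩, hcond, rfl⟩
  have h2 : (fun ug : List ℕ × List ℕ => encB ug.1 ug.2) '' DSet n = SB := by
    ext m
    constructor
    · rintro ⟨⟨u, g⟩, ⟨hu, hg, hw⟩, rfl⟩
      obtain ⟨c1, c2⟩ := encB_props u g hg
      exact ⟨⟨c1, c2⟩, by rw [sum_encB]; exact hw⟩
    · rintro ⟨⟨c1, c2⟩, hsum⟩
      obtain ⟨u, g, hu, hg, henc⟩ := surjB c1 c2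
      exact ⟨(u, g), ⟨hu, hg, by rw [← sum_encB u g, henc]; exact hsum⟩, henc⟩
  calc {p : n.Partition | (∀ a ∈ p.parts, 3 ≤ a) ∧ gapCond p.parts}.ncard
      = ((fun p : n.Partition => p.parts) '' {p : n.Partition | (∀ a ∈ p.parts, 3 ≤ a) ∧
        gapCond p.parts}).ncard := by
        rw [Set.ncard_image_of_injOn]
        intro p hp q hq hpq
        exact Nat.Partition.ext hpq
    _ = SB.ncard := by rw [h1]
    _ = ((fun ug : List ℕ × List ℕ => encB ug.1 ug.2) '' DSet n).ncard := by rw [h2]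
    _ = (DSet n).ncard := by
        rw [Set.ncard_image_of_injOn]
        rintro ⟨u, g⟩ ⟨hu, hg, -⟩ ⟨u', g'⟩ ⟨hu', hg', -⟩ h
        obtain ⟨e1, e2⟩ := injB hu hg hu' hg' h
        simp only [Prod.mk.injEq]
        exact ⟨e1, e2⟩

theorem DSet9 : DSet 9 = {(([3] : List ℕ), ([] : List ℕ)), (([0] : List ℕ), ([0] : List ℕ))} := by
  ext ⟨u, g⟩
  simp only [DSet, Set.mem_setOf_eq, Set.mem_insert_iff, Set.mem_singleton_iff, Prod.mk.injEq]
  constructor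
  · rintro ⟨hu, hg, hw⟩
    rw [weight] at hw
    have hb : u.length + g.length ≤ 2 := by
      by_contra hc
      have h3 : 3 * 5 ≤ (u.length + g.length) * (u.length + g.length + 2) :=
        Nat.mul_le_mul (by omega) (by omega)
      omega
    have hk : u.length = 0 ∨ u.length = 1 ∨ u.length = 2 := by omega
    have hj : g.length = 0 ∨ g.length = 1 ∨ g.length = 2 := by omega
    rcases hk with hk | hk | hk
    · have hu0 : u = [] := List.length_eq_zero_iff.mp hk
      subst hu0
      rcases hj with hj | hj | hj
      · have hg0 : g = [] := List.length_eq_zero_iff.mp hj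
        subst hg0
        simp at hw
      · obtain ⟨b, rfl⟩ := List.length_eq_one_iff.mp hj
        simp at hw
        omega
      · simp only [hj, List.length_nil] at hw
        omega
    · obtain ⟨a, rfl⟩ := List.length_eq_one_iff.mp hk
      rcases hj with hj | hj | hj
      · have hg0 : g = [] := List.length_eq_zero_iff.mp hj
        subst hg0
        simp at hw
        left
        constructor
        · have : a = 3 := by omega
          rw [this]
        · rfl
      · obtain ⟨b, rfl⟩ := List.length_eq_one_iff.mp hj
        simp at hw
        right
        have ha : a = 0 := by omega
        have hb2 : b = 0 := by omega
        rw [ha, hb2]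
        exact ⟨rfl, rfl⟩
      · simp only [hj, List.length_singleton] at hw
        omega
    · rcases hj with hj | hj | hj
      · simp only [hk, hj, List.length_nil] at hw
        omega
      · simp only [hk, hj] at hw
        omega
      · simp only [hk, hj] at hw
        omega
  · rintro (⟨rfl, rfl⟩ | ⟨rfl, rfl⟩)
    · exact ⟨List.pairwise_singleton _ 3, List.Pairwise.nil, by rfl⟩
    · exact ⟨List.pairwise_singleton _ 0, List.pairwise_singleton _ 0, by rfl⟩

theorem new_companion_second_and_nine :
    (∀ n : ℕ,
      {p : n.Partition | distinctOddParts p.parts ∧ minOddGe p.parts 3 ∧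
          minEvenGe p.parts (2 * (Multiset.card p.parts + 1))}.ncard =
        {p : n.Partition | (∀ a ∈ p.parts, 3 ≤ a) ∧ gapCond p.parts}.ncard) ∧
      {p : Nat.Partition 9 | distinctOddParts p.parts ∧ minOddGe p.parts 3 ∧
          minEvenGe p.parts (2 * (Multiset.card p.parts + 1))}.ncard = 2 := by
  constructor
  · intro n
    rw [cardA, cardB]
  · rw [cardA 9, DSet9, Set.ncard_pair (by decide)]
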